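/- Let φ₀(r,θ) = J₁(j₁ r) sin θ on the half-disk Ω_{0,+} = {(r,θ) : 0 < r < 1, 0 < θ < π}, where J₁ is the Bessel function of order 1 and j₁ its first positive zero. Then ∫_{Ω_{0,+}} (∂φ₀/∂x₂)² = (3/4) ∫_{Ω_{0,+}} |∇φ₀|². -/

import Mathlib

open MeasureTheory

open MeasureTheory Real
noncomputable section

abbrev E2 := EuclideanSpace ℝ (Fin 2)

lemma norm_hasFDerivAt {p : E2} (hp : p ≠ 0) :
    HasFDerivAt (fun q : E2 => ‖q‖) (innerSL ℝ ((‖p‖⁻¹ : ℝ) • p)) p := by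
  have h0 : (0:ℝ) < ‖p‖ := norm_pos_iff.mpr hp
  have h1 : HasFDerivAt (fun q : E2 => ‖q‖ ^ 2) (2 • (innerSL ℝ p)) p := by
    simpa using (hasStrictFDerivAt_norm_sq p).hasFDerivAt
  have h2 : HasDerivAt Real.sqrt (1 / (2 * Real.sqrt (‖p‖^2))) (‖p‖^2) := by
    exact Real.hasDerivAt_sqrt (by positivity)
  have h3 := h2.comp_hasFDerivAt p h1
  rw [show Real.sqrt ∘ (fun q : E2 => ‖q‖ ^ 2) = fun q : E2 => ‖q‖ from funext fun q => Real.sqrt_sq (norm_nonneg q)] at h3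
  refine h3.congr_fderiv (Eq.symm ?_)
  rw [Real.sqrt_sq (norm_nonneg p)]
  ext q
  simp [real_inner_smul_left]
  ring

variable {J1 : ℝ → ℝ} {j1 : ℝ}

def vf (J1 : ℝ → ℝ) (j1 : ℝ) (p : E2) : E2 :=
  ((j1 * deriv J1 (j1 * ‖p‖) * p 1) / ‖p‖^2 - J1 (j1 * ‖p‖) * p 1 / ‖p‖^3) • p
    + (J1 (j1 * ‖p‖) / ‖p‖) • (EuclideanSpace.single 1 1 : E2)

lemma grad_eq (hJ : ContDiff ℝ 1 J1) {φ : E2 → ℝ}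
    (hφ : ∀ p : E2, φ p = J1 (j1 * ‖p‖) * (p 1 / ‖p‖)) {p : E2} (hp : p ≠ 0) :
    HasFDerivAt φ (innerSL ℝ (vf J1 j1 p)) p := by
  have h0 : (0:ℝ) < ‖p‖ := norm_pos_iff.mpr hp
  have hN := norm_hasFDerivAt hp
  have hd : HasDerivAt J1 (deriv J1 (j1 * ‖p‖)) (j1 * ‖p‖) :=
    ((hJ.differentiable one_ne_zero) _).hasDerivAt
  have hcN : HasFDerivAt (fun q : E2 => j1 * ‖q‖) (j1 • innerSL ℝ ((‖p‖⁻¹ : ℝ) • p)) p :=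
    hN.const_mul j1
  have hA := hd.comp_hasFDerivAt p hcN
  have hB : HasFDerivAt (fun q : E2 => q 1)
      (innerSL ℝ (EuclideanSpace.single (1 : Fin 2) (1:ℝ))) p := by
    have := (innerSL ℝ (EuclideanSpace.single (1 : Fin 2) (1:ℝ))).hasFDerivAt (x := p)
    convert this using 2 with q
    simp [EuclideanSpace.inner_single_left]
  have hC := (hasDerivAt_inv h0.ne').comp_hasFDerivAt p hN
  have hφ' := hA.mul (hB.mul hC)
  have hfun : φ = fun q : E2 => J1 (j1 * ‖q‖) * (q 1 * ‖q‖⁻¹) :=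
    funext fun q => by rw [hφ q, div_eq_mul_inv]
  rw [hfun]
  refine hφ'.congr_fderiv (Eq.symm ?_)
  ext q
  simp [vf, real_inner_smul_left, inner_add_left, real_inner_smul_left,
    EuclideanSpace.inner_single_left]
  field_simp
  ring

lemma eval1 (hJ : ContDiff ℝ 1 J1) {φ : E2 → ℝ}
    (hφ : ∀ p : E2, φ p = J1 (j1 * ‖p‖) * (p 1 / ‖p‖)) {p : E2} (hp : p ≠ 0) :
    fderiv ℝ φ p (EuclideanSpace.single 1 1) = vf J1 j1 p 1 := by
  rw [(grad_eq hJ hφ hp).fderiv]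
  simp [EuclideanSpace.inner_single_right]

lemma eval2 (hJ : ContDiff ℝ 1 J1) {φ : E2 → ℝ}
    (hφ : ∀ p : E2, φ p = J1 (j1 * ‖p‖) * (p 1 / ‖p‖)) {p : E2} (hp : p ≠ 0) :
    ‖fderiv ℝ φ p‖^2 = (vf J1 j1 p 0)^2 + (vf J1 j1 p 1)^2 := by
  rw [(grad_eq hJ hφ hp).fderiv, innerSL_apply_norm, EuclideanSpace.norm_eq,
    Real.sq_sqrt (by positivity)]
  simp [Fin.sum_univ_two, sq_abs]

lemma vf_coord (p : E2) (i : Fin 2) :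
    vf J1 j1 p i = (j1 * deriv J1 (j1 * ‖p‖) * p 1 / ‖p‖^2
        - J1 (j1 * ‖p‖) * p 1 / ‖p‖^3) * p i
      + (J1 (j1 * ‖p‖) / ‖p‖) * (if i = 1 then 1 else 0) := by
  simp [vf, EuclideanSpace.single_apply]

def T2 : E2 ≃ᵐ ℝ × ℝ :=
  (MeasurableEquiv.toLp 2 (Fin 2 → ℝ)).symm.trans (MeasurableEquiv.finTwoArrow)

lemma T2_mp : MeasurePreserving T2 volume volume :=
  (volume_preserving_finTwoArrow ℝ).comp (EuclideanSpace.volume_preserving_symm_measurableEquiv_toLp (Fin 2))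

lemma T2_symm_coord (y : ℝ × ℝ) : (T2.symm y) 0 = y.1 ∧ (T2.symm y) 1 = y.2 := by
  constructor <;> rfl

lemma T2_symm_norm (y : ℝ × ℝ) : ‖T2.symm y‖ = Real.sqrt (y.1^2 + y.2^2) := by
  rw [EuclideanSpace.norm_eq]
  simp [Fin.sum_univ_two, (T2_symm_coord y).1, (T2_symm_coord y).2, sq_abs]

def Omega' : Set (ℝ × ℝ) := {x : ℝ × ℝ | x.1^2 + x.2^2 < 1 ∧ 0 < x.2}

lemma transfer (G : E2 → ℝ) {Ωp : Set E2}
    (hΩp : Ωp = {p : E2 | ‖p‖ < 1 ∧ 0 < p 1}) :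
    ∫ p in Ωp, G p ∂volume = ∫ y in Omega', G (T2.symm y) ∂volume := by
  have h1 : Ωp = T2 ⁻¹' Omega' := by
    rw [hΩp]; ext p
    have hn : ‖p‖^2 = (p 0)^2 + (p 1)^2 := by
      rw [EuclideanSpace.norm_eq, Real.sq_sqrt (by positivity)]
      simp [Fin.sum_univ_two, sq_abs]
    have hT : (T2 p).1 = p 0 ∧ (T2 p).2 = p 1 := ⟨rfl, rfl⟩
    simp only [Set.mem_setOf_eq, Set.mem_preimage, Omega', hT.1, hT.2, ← hn]
    constructor
    · rintro ⟨h, h2⟩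
      exact ⟨by nlinarith [norm_nonneg p], h2⟩
    · rintro ⟨h, h2⟩
      exact ⟨by nlinarith [norm_nonneg p, sq_nonneg (‖p‖ - 1)], h2⟩
  rw [h1, ← T2_mp.setIntegral_preimage_emb T2.measurableEmbedding]
  congr 1
  ext p
  simp

open Real in
lemma polar_step (g h : ℝ × ℝ → ℝ)
    (heq : ∀ q ∈ Set.Ioo (0:ℝ) 1 ×ˢ Set.Ioo (0:ℝ) π, g (polarCoord.symm q) = h q) :
    ∫ y in Omega', g y = ∫ q in Set.Ioo (0:ℝ) 1 ×ˢ Set.Ioo (0:ℝ) π, q.1 * h q := by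
  have hOmeas : MeasurableSet Omega' := by
    have ho : Omega' = {x : ℝ × ℝ | x.1^2 + x.2^2 < 1} ∩ {x : ℝ × ℝ | 0 < x.2} := rfl
    rw [ho]
    exact ((isOpen_lt (by continuity) continuous_const).inter
      (isOpen_lt continuous_const continuous_snd)).measurableSet
  have hSmeas : MeasurableSet (Set.Ioo (0:ℝ) 1 ×ˢ Set.Ioo (0:ℝ) π) :=
    measurableSet_Ioo.prod measurableSet_Ioo
  rw [← integral_indicator hOmeas, ← integral_comp_polarCoord_symm]
  have hsub : Set.Ioo (0:ℝ) 1 ×ˢ Set.Ioo (0:ℝ) π ⊆ polarCoord.target := by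
    rintro ⟨r, θ⟩ ⟨hr, hθ⟩
    exact ⟨hr.1, lt_trans (neg_neg_of_pos pi_pos) hθ.1, hθ.2⟩
  rw [show ∫ q in Set.Ioo (0:ℝ) 1 ×ˢ Set.Ioo (0:ℝ) π, q.1 * h q
      = ∫ q in polarCoord.target, Set.indicator (Set.Ioo (0:ℝ) 1 ×ˢ Set.Ioo (0:ℝ) π)
          (fun q => q.1 * h q) q from by
    rw [setIntegral_indicator hSmeas, Set.inter_eq_self_of_subset_right hsub]]
  apply setIntegral_congr_fun polarCoord.open_target.measurableSet
  rintro ⟨r, θ⟩ ⟨hr, hθ⟩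
  simp only [Set.mem_Ioi] at hr
  simp only [Set.mem_Ioo] at hθ
  have hps : polarCoord.symm (r, θ) = (r * cos θ, r * sin θ) := rfl
  show r • Omega'.indicator g (polarCoord.symm (r, θ))
    = (Set.Ioo (0:ℝ) 1 ×ˢ Set.Ioo (0:ℝ) π).indicator (fun q => q.1 * h q) (r, θ)
  by_cases hq : (r, θ) ∈ Set.Ioo (0:ℝ) 1 ×ˢ Set.Ioo (0:ℝ) π
  · have ⟨hr1, hθ1⟩ := hq
    have hmem : polarCoord.symm (r, θ) ∈ Omega' := by
      constructor
      · rw [hps]; show (r * cos θ)^2 + (r * sin θ)^2 < 1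
        have : (r * cos θ)^2 + (r * sin θ)^2 = r^2 := by
          have := sin_sq_add_cos_sq θ; nlinarith
        rw [this]; nlinarith [hr1.1, hr1.2]
      · rw [hps]; show 0 < r * sin θ
        exact mul_pos hr (sin_pos_of_pos_of_lt_pi hθ1.1 hθ1.2)
    rw [Set.indicator_of_mem hmem, Set.indicator_of_mem hq, heq _ hq, smul_eq_mul]
  · have hnmem : polarCoord.symm (r, θ) ∉ Omega' := by
      intro hmem
      rw [hps] at hmem
      obtain ⟨h1, h2⟩ := hmem
      simp only [Set.mem_setOf_eq] at h1 h2
      apply hq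
      refine ⟨⟨hr, ?_⟩, ?_, hθ.2⟩
      · have h1' : (r * cos θ)^2 + (r * sin θ)^2 = r^2 := by
          have := sin_sq_add_cos_sq θ; nlinarith
        rw [h1'] at h1
        nlinarith
      · by_contra hle
        push_neg at hle
        have : sin θ ≤ 0 := sin_nonpos_of_nonpos_of_neg_pi_le hle hθ.1.le
        have : r * sin θ ≤ 0 := mul_nonpos_of_nonneg_of_nonpos hr.le this
        exact absurd h2 (not_lt.mpr this)
    rw [Set.indicator_of_notMem hnmem, Set.indicator_of_notMem hq, smul_zero]

def aa (J1 : ℝ → ℝ) (j1 : ℝ) (r : ℝ) : ℝ := j1 * deriv J1 (j1 * r)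
def bb (J1 : ℝ → ℝ) (j1 : ℝ) (r : ℝ) : ℝ := J1 (j1 * r) / r

open Real in
lemma point_norm {r θ : ℝ} (hr : 0 < r) :
    ‖(T2.symm (r * cos θ, r * sin θ) : E2)‖ = r := by
  rw [T2_symm_norm]
  have : (r * cos θ)^2 + (r * sin θ)^2 = r^2 := by
    have := sin_sq_add_cos_sq θ; nlinarith
  rw [this, Real.sqrt_sq hr.le]

open Real in
lemma point_eval {r θ : ℝ} (hr : 0 < r) :
    vf J1 j1 (T2.symm (r * cos θ, r * sin θ)) 0
        = sin θ * cos θ * (aa J1 j1 r - bb J1 j1 r)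
      ∧ vf J1 j1 (T2.symm (r * cos θ, r * sin θ)) 1
        = sin θ^2 * (aa J1 j1 r - bb J1 j1 r) + bb J1 j1 r := by
  have hn := point_norm (θ := θ) hr
  have h0 := (T2_symm_coord (r * cos θ, r * sin θ)).1
  have h1 := (T2_symm_coord (r * cos θ, r * sin θ)).2
  constructor
  · rw [vf_coord, hn]; simp only [h0, h1]
    simp only [aa, bb]
    norm_num
    field_simp
  · rw [vf_coord, hn]; simp only [h0, h1]
    simp only [aa, bb]
    rw [if_pos trivial]
    field_simp

open Real intervalIntegral in
lemma Isin2 : ∫ θ in (0:ℝ)..π, sin θ^2 = π/2 := by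
  rw [integral_sin_sq]; simp

open Real intervalIntegral in
lemma Isin4 : ∫ θ in (0:ℝ)..π, sin θ^4 = 3*π/8 := by
  have := integral_sin_pow (a := 0) (b := π) 2
  norm_num at this
  calc ∫ θ in (0:ℝ)..π, sin θ^4 = ∫ θ in (0:ℝ)..π, sin θ^(2+2) := by norm_num
    _ = 3/4*(π/2) := this
    _ = 3*π/8 := by ring

open Real intervalIntegral in
lemma Icos2 : ∫ θ in (0:ℝ)..π, cos θ^2 = π/2 := by
  rw [integral_cos_sq]; simp

open Real intervalIntegral in
lemma theta_int1 (A B : ℝ) :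
    ∫ θ in Set.Ioo (0:ℝ) π, (sin θ^2 * A + B)^2 = (3*π/8)*A^2 + π*A*B + π*B^2 := by
  rw [← integral_Ioc_eq_integral_Ioo, ← intervalIntegral.integral_of_le pi_pos.le]
  have h1 : (fun θ => (sin θ^2 * A + B)^2)
      = fun θ => A^2 * sin θ^4 + (2*A*B) * sin θ^2 + B^2 := by
    funext θ; ring
  rw [h1]
  have i4 : IntervalIntegrable (fun θ => A^2 * sin θ^4) volume 0 π :=
    (Continuous.intervalIntegrable (by continuity) _ _)
  have i2 : IntervalIntegrable (fun θ => (2*A*B) * sin θ^2) volume 0 π :=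
    (Continuous.intervalIntegrable (by continuity) _ _)
  have i0 : IntervalIntegrable (fun _ : ℝ => B^2) volume 0 π :=
    (Continuous.intervalIntegrable (by continuity) _ _)
  rw [integral_add (i4.add i2) i0, integral_add i4 i2, intervalIntegral.integral_const_mul, intervalIntegral.integral_const_mul,
    intervalIntegral.integral_const, Isin4, Isin2]
  simp
  ring

open Real intervalIntegral in
lemma theta_int2 (A B : ℝ) :
    ∫ θ in Set.Ioo (0:ℝ) π, (A^2 * sin θ^2 + B^2 * cos θ^2) = (π/2)*(A^2+B^2) := by
  rw [← integral_Ioc_eq_integral_Ioo, ← intervalIntegral.integral_of_le pi_pos.le]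
  have i1 : IntervalIntegrable (fun θ => A^2 * sin θ^2) volume 0 π :=
    (Continuous.intervalIntegrable (by continuity) _ _)
  have i2 : IntervalIntegrable (fun θ => B^2 * cos θ^2) volume 0 π :=
    (Continuous.intervalIntegrable (by continuity) _ _)
  rw [integral_add i1 i2, intervalIntegral.integral_const_mul, intervalIntegral.integral_const_mul, Isin2, Icos2]
  ring

lemma bound_aa (hJ : ContDiff ℝ 1 J1) :
    ∃ Ca : ℝ, 0 ≤ Ca ∧ ∀ r ∈ Set.Icc (0:ℝ) 1, |aa J1 j1 r| ≤ Ca := by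
  have hc : ContinuousOn (aa J1 j1) (Set.Icc (0:ℝ) 1) := by
    apply Continuous.continuousOn
    exact continuous_const.mul ((hJ.continuous_deriv le_rfl).comp
      (continuous_const.mul continuous_id))
  obtain ⟨C, hC⟩ := isCompact_Icc.exists_bound_of_continuousOn hc
  refine ⟨max C 0, le_max_right _ _, fun r hr => ?_⟩
  exact le_trans (hC r hr) (le_max_left _ _)

lemma bound_bb (hJ : ContDiff ℝ 1 J1) (hj1 : 0 < j1) (hJ0 : J1 0 = 0) :
    ∃ Cb : ℝ, 0 ≤ Cb ∧ ∀ r ∈ Set.Ioo (0:ℝ) 1, |bb J1 j1 r| ≤ Cb := by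
  have hc : ContinuousOn (deriv J1) (Set.Icc (0:ℝ) j1) :=
    (hJ.continuous_deriv le_rfl).continuousOn
  obtain ⟨C, hC⟩ := isCompact_Icc.exists_bound_of_continuousOn hc
  have hC0 : 0 ≤ C := le_trans (norm_nonneg _) (hC 0 ⟨le_rfl, hj1.le⟩)
  refine ⟨C * j1, by positivity, fun r hr => ?_⟩
  obtain ⟨hr0, hr1⟩ := hr
  have hmem : j1 * r ∈ Set.Icc (0:ℝ) j1 :=
    ⟨by positivity, by nlinarith⟩
  have h0mem : (0:ℝ) ∈ Set.Icc (0:ℝ) j1 := ⟨le_rfl, hj1.le⟩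
  have := (convex_Icc (0:ℝ) j1).norm_image_sub_le_of_norm_deriv_le
    (fun x _ => (hJ.differentiable one_ne_zero) x) hC h0mem hmem
  rw [hJ0, sub_zero, sub_zero] at this
  have hJb : |J1 (j1 * r)| ≤ C * (j1 * r) := by
    simpa [abs_of_pos hj1, abs_of_pos hr0] using this
  rw [bb, abs_div, abs_of_pos hr0, div_le_iff₀ hr0]
  calc |J1 (j1 * r)| ≤ C * (j1 * r) := hJb
    _ = C * j1 * r := by ring

lemma ftc (hJ : ContDiff ℝ 1 J1) (hJ0 : J1 0 = 0) (hJz : J1 j1 = 0) :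
    ∫ r in Set.Ioo (0:ℝ) 1, aa J1 j1 r * J1 (j1 * r) = 0 := by
  rw [← integral_Ioc_eq_integral_Ioo, ← intervalIntegral.integral_of_le zero_le_one]
  have hg : ∀ x : ℝ, HasDerivAt (fun r => J1 (j1 * r)) (j1 * deriv J1 (j1 * x)) x := by
    intro x
    have h1 : HasDerivAt (fun r : ℝ => j1 * r) j1 x := by
      simpa using (hasDerivAt_id x).const_mul j1
    exact (((hJ.differentiable one_ne_zero) (j1 * x)).hasDerivAt.comp x h1).congr_deriv (mul_comm _ _)
  have hF : ∀ x ∈ Set.uIcc (0:ℝ) 1, HasDerivAt (fun r => J1 (j1 * r)^2 / 2)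
      (aa J1 j1 x * J1 (j1 * x)) x := by
    intro x _
    have := ((hg x).mul (hg x)).div_const 2
    refine (this.congr_deriv ?_).congr_of_eventuallyEq (Filter.Eventually.of_forall fun r => ?_)
    · rw [aa]; ring
    · show J1 (j1 * r)^2 / 2 = (J1 (j1 * r) * J1 (j1 * r)) / 2; ring
  have hint : IntervalIntegrable (fun x => aa J1 j1 x * J1 (j1 * x)) volume 0 1 := by
    apply Continuous.intervalIntegrable
    exact (continuous_const.mul ((hJ.continuous_deriv le_rfl).comp
      (continuous_const.mul continuous_id))).mul
      (hJ.continuous.comp (continuous_const.mul continuous_id))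
  rw [intervalIntegral.integral_eq_sub_of_hasDerivAt hF hint]
  simp [hJ0, hJz]

lemma measS : MeasurableSet (Set.Ioo (0:ℝ) 1 ×ˢ Set.Ioo (0:ℝ) Real.pi) :=
  measurableSet_Ioo.prod measurableSet_Ioo

lemma fubini_S (H : ℝ × ℝ → ℝ) (hm : Measurable H) (M : ℝ)
    (hbd : ∀ q ∈ Set.Ioo (0:ℝ) 1 ×ˢ Set.Ioo (0:ℝ) Real.pi, |H q| ≤ M) :
    ∫ q in Set.Ioo (0:ℝ) 1 ×ˢ Set.Ioo (0:ℝ) Real.pi, q.1 * H q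
      = ∫ r in Set.Ioo (0:ℝ) 1, ∫ θ in Set.Ioo (0:ℝ) Real.pi, r * H (r, θ) := by
  have hfin : volume (Set.Ioo (0:ℝ) 1 ×ˢ Set.Ioo (0:ℝ) Real.pi) ≠ ⊤ := by
    apply ne_of_lt
    apply lt_of_le_of_lt (measure_mono (Set.prod_mono Set.Ioo_subset_Icc_self
      Set.Ioo_subset_Icc_self))
    exact (isCompact_Icc.prod isCompact_Icc).measure_lt_top
  have hint : IntegrableOn (fun q : ℝ × ℝ => q.1 * H q)
      (Set.Ioo (0:ℝ) 1 ×ˢ Set.Ioo (0:ℝ) Real.pi) volume := by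
    apply Measure.integrableOn_of_bounded hfin
      ((measurable_fst.mul hm).aestronglyMeasurable)
    rw [ae_restrict_iff' measS]
    filter_upwards with q hq
    have h1 : |q.1| ≤ 1 := by
      rw [abs_of_pos hq.1.1]; exact hq.1.2.le
    calc ‖q.1 * H q‖ = |q.1| * |H q| := abs_mul _ _
      _ ≤ 1 * M := mul_le_mul h1 (hbd q hq) (abs_nonneg _) zero_le_one
      _ = M := one_mul M
  have h2 : Integrable (fun q : ℝ × ℝ => q.1 * H q)
      ((volume.restrict (Set.Ioo (0:ℝ) 1)).prod (volume.restrict (Set.Ioo (0:ℝ) Real.pi))) := by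
    rw [Measure.prod_restrict, ← Measure.volume_eq_prod]
    exact hint
  calc ∫ q in Set.Ioo (0:ℝ) 1 ×ˢ Set.Ioo (0:ℝ) Real.pi, q.1 * H q
      = ∫ q, q.1 * H q
        ∂((volume.restrict (Set.Ioo (0:ℝ) 1)).prod (volume.restrict (Set.Ioo (0:ℝ) Real.pi))) := by
        rw [Measure.prod_restrict, ← Measure.volume_eq_prod]
    _ = ∫ r in Set.Ioo (0:ℝ) 1, ∫ θ in Set.Ioo (0:ℝ) Real.pi, r * H (r, θ) :=
        MeasureTheory.integral_prod _ h2

/-- For `φ₀(r,θ) = J₁(j₁ r) sin θ` on the half-disk (with `J₁` vanishing at `0` and at its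
first positive zero `j₁`), the integral of `(∂φ₀/∂x₂)²` equals `3/4` of the Dirichlet
integral of `φ₀`. -/
theorem stmt_6 (J1 : ℝ → ℝ) (j1 : ℝ) (hj1 : 0 < j1)
    (hJ : ContDiff ℝ 1 J1) (hJ0 : J1 0 = 0) (hJz : J1 j1 = 0)
    (hfirst : ∀ x : ℝ, 0 < x → x < j1 → J1 x ≠ 0)
    (φ : EuclideanSpace ℝ (Fin 2) → ℝ)
    (hφ : ∀ p : EuclideanSpace ℝ (Fin 2), φ p = J1 (j1 * ‖p‖) * (p 1 / ‖p‖))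
    (Ωp : Set (EuclideanSpace ℝ (Fin 2)))
    (hΩp : Ωp = {p : EuclideanSpace ℝ (Fin 2) | ‖p‖ < 1 ∧ 0 < p 1}) :
    ∫ p in Ωp, (fderiv ℝ φ p (EuclideanSpace.single 1 1)) ^ 2 ∂volume
      = (3 / 4) * ∫ p in Ωp, ‖fderiv ℝ φ p‖ ^ 2 ∂volume := by
  obtain ⟨Ca, hCa0, hCa⟩ := bound_aa (J1 := J1) (j1 := j1) hJ
  obtain ⟨Cb, hCb0, hCb⟩ := bound_bb hJ hj1 hJ0
  set a : ℝ → ℝ := aa J1 j1 with ha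
  set b : ℝ → ℝ := bb J1 j1 with hb
  -- point nonvanishing helper
  have hpne : ∀ q : ℝ × ℝ, 0 < q.1 →
      (T2.symm (q.1 * cos q.2, q.1 * sin q.2) : E2) ≠ 0 := by
    intro q hq1 h0
    have hn := point_norm (θ := q.2) hq1
    rw [h0, norm_zero] at hn
    exact hq1.ne hn
  -- left-hand side
  have hL : ∫ p in Ωp, (fderiv ℝ φ p (EuclideanSpace.single 1 1)) ^ 2 ∂volume
      = ∫ q in Set.Ioo (0:ℝ) 1 ×ˢ Set.Ioo (0:ℝ) π,
          q.1 * ((sin q.2^2 * (a q.1 - b q.1) + b q.1)^2) := by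
    rw [transfer _ hΩp]
    apply polar_step
    intro q hq
    have hps : polarCoord.symm q = (q.1 * cos q.2, q.1 * sin q.2) := rfl
    rw [hps, eval1 hJ hφ (hpne q hq.1.1), (point_eval (J1 := J1) (j1 := j1) hq.1.1).2]
  -- right-hand side
  have hR : ∫ p in Ωp, ‖fderiv ℝ φ p‖ ^ 2 ∂volume
      = ∫ q in Set.Ioo (0:ℝ) 1 ×ˢ Set.Ioo (0:ℝ) π,
          q.1 * ((a q.1)^2 * sin q.2^2 + (b q.1)^2 * cos q.2^2) := by
    rw [transfer _ hΩp]
    apply polar_step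
    intro q hq
    have hps : polarCoord.symm q = (q.1 * cos q.2, q.1 * sin q.2) := rfl
    rw [hps, eval2 hJ hφ (hpne q hq.1.1), (point_eval (J1 := J1) (j1 := j1) hq.1.1).1,
      (point_eval (J1 := J1) (j1 := j1) hq.1.1).2]
    linear_combination (sin q.2^2 * (a q.1 - b q.1)^2 - (b q.1)^2) * (sin_sq_add_cos_sq q.2)
  -- measurability of a and b
  have hma : Measurable a := (continuous_const.mul ((hJ.continuous_deriv le_rfl).comp
      (continuous_const.mul continuous_id))).measurable
  have hmb : Measurable b := ((hJ.continuous.comp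
      (continuous_const.mul continuous_id)).measurable).div measurable_id
  -- Fubini for both sides
  have hF1 : ∫ q in Set.Ioo (0:ℝ) 1 ×ˢ Set.Ioo (0:ℝ) π,
        q.1 * ((sin q.2^2 * (a q.1 - b q.1) + b q.1)^2)
      = ∫ r in Set.Ioo (0:ℝ) 1, ∫ θ in Set.Ioo (0:ℝ) π,
          r * ((sin θ^2 * (a r - b r) + b r)^2) := by
    apply fubini_S _ ?_ ((Ca + Cb + Cb)^2)
    · intro q hq
      have h1 : |sin q.2^2 * (a q.1 - b q.1) + b q.1| ≤ Ca + Cb + Cb := by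
        have hs : |sin q.2^2| ≤ 1 := by
          rw [abs_of_nonneg (sq_nonneg _)]
          exact sin_sq_le_one q.2
        have hab : |a q.1 - b q.1| ≤ Ca + Cb :=
          le_trans (abs_sub _ _) (add_le_add
            (hCa q.1 (Set.Ioo_subset_Icc_self hq.1)) (hCb q.1 hq.1))
        calc |sin q.2^2 * (a q.1 - b q.1) + b q.1|
            ≤ |sin q.2^2| * |a q.1 - b q.1| + |b q.1| := by
              rw [← abs_mul]; exact abs_add_le _ _
          _ ≤ 1 * (Ca + Cb) + Cb := add_le_add
              (mul_le_mul hs hab (abs_nonneg _) zero_le_one) (hCb q.1 hq.1)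
          _ = Ca + Cb + Cb := by ring
      rw [abs_of_nonneg (sq_nonneg _), ← sq_abs]
      exact pow_le_pow_left₀ (abs_nonneg _) h1 2
    · exact ((((measurable_sin.comp measurable_snd).pow_const 2).mul
        ((hma.comp measurable_fst).sub (hmb.comp measurable_fst))).add
        (hmb.comp measurable_fst)).pow_const 2
  have hF2 : ∫ q in Set.Ioo (0:ℝ) 1 ×ˢ Set.Ioo (0:ℝ) π,
        q.1 * ((a q.1)^2 * sin q.2^2 + (b q.1)^2 * cos q.2^2)
      = ∫ r in Set.Ioo (0:ℝ) 1, ∫ θ in Set.Ioo (0:ℝ) π,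
          r * ((a r)^2 * sin θ^2 + (b r)^2 * cos θ^2) := by
    apply fubini_S _ ?_ (Ca^2 + Cb^2)
    · intro q hq
      have h1 : (a q.1)^2 ≤ Ca^2 := by
        rw [← sq_abs]
        exact pow_le_pow_left₀ (abs_nonneg _) (hCa q.1 (Set.Ioo_subset_Icc_self hq.1)) 2
      have h2 : (b q.1)^2 ≤ Cb^2 := by
        rw [← sq_abs]
        exact pow_le_pow_left₀ (abs_nonneg _) (hCb q.1 hq.1) 2
      have hs : sin q.2^2 ≤ 1 := sin_sq_le_one q.2
      have hc : cos q.2^2 ≤ 1 := cos_sq_le_one q.2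
      rw [abs_of_nonneg (by positivity)]
      nlinarith [sq_nonneg (sin q.2), sq_nonneg (cos q.2), sq_nonneg (a q.1), sq_nonneg (b q.1)]
    · exact (((hma.comp measurable_fst).pow_const 2).mul
        ((measurable_sin.comp measurable_snd).pow_const 2)).add
        (((hmb.comp measurable_fst).pow_const 2).mul
        ((measurable_cos.comp measurable_snd).pow_const 2))
  -- inner theta integrals
  have hI1 : ∀ r ∈ Set.Ioo (0:ℝ) 1,
      ∫ θ in Set.Ioo (0:ℝ) π, r * ((sin θ^2 * (a r - b r) + b r)^2)
        = (3*π/8) * (r * ((a r)^2 + (b r)^2)) + (π/4) * (a r * J1 (j1 * r)) := by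
    intro r hr
    rw [MeasureTheory.integral_const_mul, theta_int1]
    have hrb : r * b r = J1 (j1 * r) := by
      rw [hb, bb]; field_simp
      exact mul_div_cancel_left₀ _ hr.1.ne'
    linear_combination (π/4 * a r) * hrb
  have hI2 : ∀ r ∈ Set.Ioo (0:ℝ) 1,
      ∫ θ in Set.Ioo (0:ℝ) π, r * ((a r)^2 * sin θ^2 + (b r)^2 * cos θ^2)
        = (π/2) * (r * ((a r)^2 + (b r)^2)) := by
    intro r _
    rw [MeasureTheory.integral_const_mul, theta_int2]
    ring
  -- integrability of radial pieces
  have hP1 : IntegrableOn (fun r => r * ((a r)^2 + (b r)^2)) (Set.Ioo (0:ℝ) 1) volume := by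
    refine Measure.integrableOn_of_bounded (M := Ca^2 + Cb^2) ?_ ?_ ?_
    · rw [Real.volume_Ioo]; exact ENNReal.ofReal_ne_top
    · exact (measurable_id.mul ((hma.pow_const 2).add (hmb.pow_const 2))).aestronglyMeasurable
    · rw [ae_restrict_iff' measurableSet_Ioo]
      filter_upwards with r hr
      have h1 : (a r)^2 ≤ Ca^2 := by
        rw [← sq_abs]
        exact pow_le_pow_left₀ (abs_nonneg _) (hCa r (Set.Ioo_subset_Icc_self hr)) 2
      have h2 : (b r)^2 ≤ Cb^2 := by
        rw [← sq_abs]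
        exact pow_le_pow_left₀ (abs_nonneg _) (hCb r hr) 2
      rw [Real.norm_eq_abs, abs_of_nonneg (mul_nonneg hr.1.le (by positivity))]
      nlinarith [hr.1.le, hr.2.le, sq_nonneg (a r), sq_nonneg (b r)]
  have hP2 : IntegrableOn (fun r => a r * J1 (j1 * r)) (Set.Ioo (0:ℝ) 1) volume := by
    apply IntegrableOn.mono_set _ Set.Ioo_subset_Icc_self
    apply Continuous.integrableOn_Icc
    exact (continuous_const.mul ((hJ.continuous_deriv le_rfl).comp
      (continuous_const.mul continuous_id))).mul
      (hJ.continuous.comp (continuous_const.mul continuous_id))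
  -- put it together
  rw [hL, hR, hF1, hF2,
    setIntegral_congr_fun measurableSet_Ioo hI1,
    setIntegral_congr_fun measurableSet_Ioo hI2]
  rw [integral_add ((hP1.const_mul _)) ((hP2.const_mul _)),
    MeasureTheory.integral_const_mul, MeasureTheory.integral_const_mul,
    MeasureTheory.integral_const_mul, ftc hJ hJ0 hJz]
  ring

end
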